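/- (Preservation by relabeling.) If (N₁, m₁) ▷_E (N₂, m₂), then (N₁[a/b], m₁) ▷_E (N₂[a/b], m₂), where N[a/b] relabels every transition labeled a to be labeled b instead. -/

import Mathlib

/-- A labeled Petri net over a global type `V` of variables/places and labels in
`L` (`none` is the silent label `τ`).  The net only uses the places in `places`:
the flow functions vanish outside of it. -/
structure LNet (V L : Type) where
  T : Type
  places : Set V
  Pre : T → V → ℕ
  Post : T → V → ℕ
  pre_supp : ∀ t p, p ∉ places → Pre t p = 0
  post_supp : ∀ t p, p ∉ places → Post t p = 0
  label : T → Option L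

namespace LNet

variable {V L : Type}

/-- Transition `t` is enabled at marking `m`. -/
def Enabled (N : LNet V L) (m : V → ℕ) (t : N.T) : Prop :=
  ∀ p, N.Pre t p ≤ m p

/-- `m →t m'` : `t` is enabled at `m` and `m' = m - Pre(t) + Post(t)` (pointwise). -/
def Fire (N : LNet V L) (m : V → ℕ) (t : N.T) (m' : V → ℕ) : Prop :=
  N.Enabled m t ∧ ∀ p, m' p = m p - N.Pre t p + N.Post t p

/-- `m ⇒ρ m'` : the firing sequence `ρ` fires from `m` to `m'`. -/
def FireSeq (N : LNet V L) : (V → ℕ) → List N.T → (V → ℕ) → Prop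
  | m, [], m' => m' = m
  | m, t :: ρ, m'' => ∃ m', N.Fire m t m' ∧ N.FireSeq m' ρ m''

/-- Reachability from `m₀`. -/
def Reach (N : LNet V L) (m₀ m : V → ℕ) : Prop :=
  ∃ ρ, N.FireSeq m₀ ρ m

/-- The observation sequence of a firing sequence (silent transitions erased). -/
def Obs (N : LNet V L) (ρ : List N.T) : List L :=
  ρ.filterMap N.label

end LNet

/-- `m₁ ⊎ m₂ ⊨ E` : the two markings are compatible and, jointly, satisfy the
constraint system `E` (i.e. `E ∧ m̲₁ ∧ m̲₂` is satisfiable: some valuation of all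
the variables agrees with `m₁` on `P₁`, with `m₂` on `P₂` and satisfies `E`). -/
def JSat {V L : Type} (N₁ N₂ : LNet V L) (E : (V → ℕ) → Prop)
    (m₁ m₂ : V → ℕ) : Prop :=
  ∃ v : V → ℕ, (∀ p ∈ N₁.places, v p = m₁ p) ∧ (∀ p ∈ N₂.places, v p = m₂ p) ∧ E v

/-- `(N₁, m₁) ⊒_E (N₂, m₂)` : `(N₂, m₂)` is an `E`-abstraction of `(N₁, m₁)`,
conditions (A1) and (A2). -/
def EAbs {V L : Type} (N₁ : LNet V L) (m₁ : V → ℕ) (N₂ : LNet V L) (m₂ : V → ℕ)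
    (E : (V → ℕ) → Prop) : Prop :=
  -- (A1) the initial markings jointly satisfy `E`
  JSat N₁ N₂ E m₁ m₂ ∧
  -- (A2)
  ∀ ρ₁ m₁', N₁.FireSeq m₁ ρ₁ m₁' →
    (∃ m₂' : V → ℕ, JSat N₁ N₂ E m₁' m₂') ∧
    ∀ m₂' : V → ℕ, JSat N₁ N₂ E m₁' m₂' →
      ∃ ρ₂ m₂'', N₂.FireSeq m₂ ρ₂ m₂'' ∧ (∀ p ∈ N₂.places, m₂'' p = m₂' p) ∧
        N₁.Obs ρ₁ = N₂.Obs ρ₂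

/-- `(N₁, m₁) ▷_E (N₂, m₂)` : `E`-abstraction equivalence (abstraction in both
directions). -/
def EEquiv {V L : Type} (N₁ : LNet V L) (m₁ : V → ℕ) (N₂ : LNet V L) (m₂ : V → ℕ)
    (E : (V → ℕ) → Prop) : Prop :=
  EAbs N₁ m₁ N₂ m₂ E ∧ EAbs N₂ m₂ N₁ m₁ E

/-- `F` is a formula whose (free) variables all belong to `S`: its truth value
only depends on the values of the variables in `S`. -/
def LNetDependsOn {V : Type} (F : (V → ℕ) → Prop) (S : Set V) : Prop :=
  ∀ v w : V → ℕ, (∀ x ∈ S, v x = w x) → (F v ↔ F w)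

/-- `N[a/b]` : relabel every transition labeled `a` to carry label `b` instead
(`b` may be the silent label `τ`, i.e. `none`). -/
def LNet.relabel {V L : Type} [DecidableEq L] (N : LNet V L) (a : L) (b : Option L) :
    LNet V L :=
  { N with label := fun t => if N.label t = some a then b else N.label t }


lemma LNet.Obs_relabel {V L : Type} [DecidableEq L] (N : LNet V L) (a : L)
    (b : Option L) (ρ : List N.T) :
    (N.relabel a b).Obs ρ = (N.Obs ρ).filterMap (fun l => if l = a then b else some l) := by
  simp only [LNet.Obs, LNet.relabel, List.filterMap_filterMap]
  congr 1
  funext t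
  cases h : N.label t <;> simp [Option.bind, h]


lemma LNet.FireSeq_relabel {V L : Type} [DecidableEq L] (N : LNet V L) (a : L)
    (b : Option L) (ρ : List N.T) (m m' : V → ℕ) :
    (N.relabel a b).FireSeq m ρ m' ↔ N.FireSeq m ρ m' := by
  induction ρ generalizing m with
  | nil => rfl
  | cons t ρ ih =>
    simp only [LNet.FireSeq, LNet.Fire, LNet.Enabled, LNet.relabel]
    exact exists_congr fun m₀ => and_congr_right fun _ => ih m₀

lemma EAbs_relabel {V L : Type} [DecidableEq L] (N₁ N₂ : LNet V L)
    (m₁ m₂ : V → ℕ) (E : (V → ℕ) → Prop) (a : L) (b : Option L)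
    (h : EAbs N₁ m₁ N₂ m₂ E) :
    EAbs (N₁.relabel a b) m₁ (N₂.relabel a b) m₂ E := by
  obtain ⟨h1, h2⟩ := h
  refine ⟨h1, fun ρ₁ m₁' hfs => ?_⟩
  obtain ⟨he, h3⟩ := h2 ρ₁ m₁' ((LNet.FireSeq_relabel N₁ a b ρ₁ m₁ m₁').mp hfs)
  refine ⟨he, fun m₂' hj => ?_⟩
  obtain ⟨ρ₂, m₂'', hfs2, hag, hobs⟩ := h3 m₂' hj
  exact ⟨ρ₂, m₂'', (LNet.FireSeq_relabel N₂ a b ρ₂ m₂ m₂'').mpr hfs2, hag, by rw [LNet.Obs_relabel N₁ a b ρ₁, LNet.Obs_relabel N₂ a b ρ₂, hobs]⟩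

/-- (Preservation by relabeling.)  If `(N₁, m₁) ▷_E (N₂, m₂)` then
`(N₁[a/b], m₁) ▷_E (N₂[a/b], m₂)`. -/
theorem EEquiv_relabel {V L : Type} [DecidableEq L] (N₁ N₂ : LNet V L)
    (m₁ m₂ : V → ℕ) (E : (V → ℕ) → Prop) (a : L) (b : Option L)
    (h : EEquiv N₁ m₁ N₂ m₂ E) :
    EEquiv (N₁.relabel a b) m₁ (N₂.relabel a b) m₂ E :=
  ⟨EAbs_relabel _ _ _ _ _ _ _ h.1, EAbs_relabel _ _ _ _ _ _ _ h.2⟩
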